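/- arXiv:2211.04788 — 4 statements merged into one kernel-verified Lean document; each statement's English description precedes it below -/
import Mathlib

section
/- Let C be an n×n symmetric positive definite integer matrix with even diagonal (finite symmetric Cartan type), and let w, v ∈ ℤ_{≥0}^n be such that every entry of w − Cv is nonnegative (i.e. μ is dominant). Then for every nonzero integer vector u with 0 ≤ u ≤ v, one has u·(w − Cv) + u·(Cu) ≥ 2. -/
open Matrix

/-- The quadratic form of a symmetric integer matrix with even diagonal takes even values. -/
lemma even_quadform {n : ℕ} (C : Matrix (Fin n) (Fin n) ℤ)
    (hsymm : ∀ i j, C i j = C j i) (heven : ∀ i, Even (C i i))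
    (u : Fin n → ℤ) : Even (u ⬝ᵥ C.mulVec u) := by
  have h : u ⬝ᵥ C.mulVec u = ∑ p ∈ Finset.univ ×ˢ Finset.univ,
      u p.1 * C p.1 p.2 * u p.2 := by
    rw [Finset.sum_product]
    simp [dotProduct, Matrix.mulVec, Finset.mul_sum, mul_assoc]
  rw [h, even_iff_two_dvd, show (2:ℤ) = ((2:ℕ):ℤ) from rfl, ← ZMod.intCast_zmod_eq_zero_iff_dvd]
  push_cast
  apply Finset.sum_ninvolution Prod.swap
  · intro p
    have : ((C p.2 p.1 : ℤ) : ZMod 2) = ((C p.1 p.2 : ℤ) : ZMod 2) := by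
      rw [hsymm]
    rw [Prod.fst_swap, Prod.snd_swap, this,
      show ((u p.2 : ZMod 2) * (C p.1 p.2 : ℤ) * u p.1)
        = ((u p.1 : ZMod 2) * (C p.1 p.2 : ℤ) * u p.2) by ring]
    exact CharTwo.add_self_eq_zero _
  · intro p hp hswap
    apply hp
    have h1 : p.1 = p.2 := (congrArg Prod.fst hswap).symm
    obtain ⟨k, hk⟩ := heven p.2
    rw [h1, hk]
    push_cast
    rw [show ((u p.2 : ZMod 2) * ((k : ZMod 2) + k) * u p.2)
        = ((u p.2 : ZMod 2) * k * u p.2) + ((u p.2 : ZMod 2) * k * u p.2) by ring]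
    exact CharTwo.add_self_eq_zero _
  · intro p; simp
  · intro p; simp

/-- In finite symmetric Cartan type (C symmetric positive definite with even diagonal),
dominance of `μ` (all entries of `w - Cv` nonnegative) implies the good condition:
`u·(w − Cv) + u·(Cu) ≥ 2` for all nonzero `0 ≤ u ≤ v`. -/
theorem stmt_5 {n : ℕ} (C : Matrix (Fin n) (Fin n) ℤ)
    (hsymm : ∀ i j, C i j = C j i)
    (heven : ∀ i, Even (C i i))
    (hposdef : ∀ x : Fin n → ℝ, x ≠ 0 → 0 < x ⬝ᵥ (C.map (Int.cast : ℤ → ℝ)).mulVec x)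
    (w v : Fin n → ℤ) (hw : 0 ≤ w) (hv : 0 ≤ v)
    (hdom : 0 ≤ w - C.mulVec v)
    (u : Fin n → ℤ) (hu : u ≠ 0) (hu0 : 0 ≤ u) (huv : u ≤ v) :
    2 ≤ u ⬝ᵥ (w - C.mulVec v) + u ⬝ᵥ C.mulVec u := by
  have h1 : 0 ≤ u ⬝ᵥ (w - C.mulVec v) :=
    Finset.sum_nonneg fun i _ => mul_nonneg (hu0 i) (hdom i)
  have h2 : 2 ≤ u ⬝ᵥ C.mulVec u := by
    have hur : (fun i => (u i : ℝ)) ≠ 0 := by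
      intro h
      apply hu
      funext i
      have := congrFun h i
      simpa using this
    have hpos := hposdef _ hur
    have hcast : ((u ⬝ᵥ C.mulVec u : ℤ) : ℝ) =
        (fun i => (u i : ℝ)) ⬝ᵥ (C.map (Int.cast : ℤ → ℝ)).mulVec (fun i => (u i : ℝ)) := by
      simp [dotProduct, Matrix.mulVec, Matrix.map]
    have hpos' : 0 < u ⬝ᵥ C.mulVec u := by
      have : (0 : ℝ) < ((u ⬝ᵥ C.mulVec u : ℤ) : ℝ) := by rw [hcast]; exact hpos
      exact_mod_cast this
    obtain ⟨k, hk⟩ := even_quadform C hsymm heven u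
    omega
  linarith
end

section
/- Let C be a symmetric positive semidefinite integer matrix with even diagonal whose kernel is spanned by δ ∈ ℤ_{>0}^n. Let w, v ∈ ℤ_{≥0}^n with all entries of w − Cv nonnegative and δ·(w − Cv) = 1 (level 1). Then for every nonzero integer u with 0 ≤ u ≤ v, u·(w − Cv) + u·(Cu) ≥ 1; moreover if δ ≤ v entrywise, then equality is attained at u = δ. -/
open Matrix

/-- In affine symmetric type at level 1, a dominant `μ` satisfies the conicity
condition (`≥ 1` for all nonzero `0 ≤ u ≤ v`), and if `δ ≤ v` the bound `1` is
attained at `u = δ`, so the good condition fails. -/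
theorem stmt_7 {n : ℕ} (C : Matrix (Fin n) (Fin n) ℤ)
    (hsymm : ∀ i j, C i j = C j i)
    (heven : ∀ i, Even (C i i))
    (hpsd : ∀ x : Fin n → ℝ, 0 ≤ x ⬝ᵥ (C.map (Int.cast : ℤ → ℝ)).mulVec x)
    (δ : Fin n → ℤ) (hδpos : ∀ i, 0 < δ i)
    (hker : ∀ x : Fin n → ℚ,
      (C.map (Int.cast : ℤ → ℚ)).mulVec x = 0 ↔ ∃ c : ℚ, x = c • fun i => (δ i : ℚ))
    (w v : Fin n → ℤ) (hw : 0 ≤ w) (hv : 0 ≤ v)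
    (hdom : 0 ≤ w - C.mulVec v)
    (hlevel : δ ⬝ᵥ (w - C.mulVec v) = 1) :
    (∀ u : Fin n → ℤ, u ≠ 0 → 0 ≤ u → u ≤ v →
        1 ≤ u ⬝ᵥ (w - C.mulVec v) + u ⬝ᵥ C.mulVec u) ∧
      (δ ≤ v → δ ⬝ᵥ (w - C.mulVec v) + δ ⬝ᵥ C.mulVec δ = 1) := by
  set μ := w - C.mulVec v with hμdef
  set M : Matrix (Fin n) (Fin n) ℝ := C.map (Int.cast : ℤ → ℝ) with hM
  -- symmetry of the real matrix form
  have hMsymm : ∀ (a b : Fin n → ℝ), a ⬝ᵥ M.mulVec b = b ⬝ᵥ M.mulVec a := by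
    intro a b
    simp only [Matrix.mulVec, dotProduct, Finset.mul_sum]
    rw [Finset.sum_comm]
    refine Finset.sum_congr rfl fun i _ => Finset.sum_congr rfl fun j _ => ?_
    simp only [hM, Matrix.map_apply, hsymm i j]
    ring
  -- casting the quadratic form to ℝ
  have hcastq : ∀ u : Fin n → ℤ,
      ((u ⬝ᵥ C.mulVec u : ℤ) : ℝ) = (fun i => (u i : ℝ)) ⬝ᵥ M.mulVec (fun i => (u i : ℝ)) := by
    intro u
    simp [hM, Matrix.mulVec, dotProduct, Matrix.map_apply, Finset.mul_sum]
  -- C δ = 0 over ℤ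
  have hCδ : C.mulVec δ = 0 := by
    have h := (hker (fun i => (δ i : ℚ))).mpr ⟨1, by funext i; simp⟩
    funext i
    have hi : (C.map (Int.cast : ℤ → ℚ)).mulVec (fun i => (δ i : ℚ)) i = 0 := by
      simpa using congrFun h i
    have : ((C.mulVec δ) i : ℚ) = 0 := by
      rw [← hi]
      simp [Matrix.mulVec, dotProduct, Matrix.map_apply]
    exact_mod_cast this
  constructor
  · intro u hu0 hupos huv
    have hμpos : 0 ≤ u ⬝ᵥ μ := by
      apply Finset.sum_nonneg
      intro i _
      exact mul_nonneg (hupos i) (hdom i)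
    have hq : 0 ≤ u ⬝ᵥ C.mulVec u := by
      have := hpsd (fun i => (u i : ℝ))
      rw [← hcastq u] at this
      exact_mod_cast this
    rcases eq_or_lt_of_le hq with h0 | h1
    · -- degenerate case: quadratic form vanishes, u is a multiple of δ
      have hx0 : (fun i => (u i : ℝ)) ⬝ᵥ M.mulVec (fun i => (u i : ℝ)) = 0 := by
        rw [← hcastq u, ← h0]; norm_num
      -- M (u cast) = 0
      have hMu : M.mulVec (fun i => (u i : ℝ)) = 0 := by
        funext i
        simp only [Pi.zero_apply]
        set x : Fin n → ℝ := fun i => (u i : ℝ) with hxdef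
        set y : Fin n → ℝ := Pi.single i 1 with hydef
        have hb : 0 ≤ y ⬝ᵥ M.mulVec y := hpsd y
        set a : ℝ := y ⬝ᵥ M.mulVec x with hadef
        set b : ℝ := y ⬝ᵥ M.mulVec y with hbdef
        have key : ∀ t : ℝ, 0 ≤ 2 * t * a + t ^ 2 * b := by
          intro t
          have h := hpsd (x + t • y)
          have hexp : (x + t • y) ⬝ᵥ M.mulVec (x + t • y)
              = x ⬝ᵥ M.mulVec x + 2 * t * a + t ^ 2 * b := by
            have hsym := hMsymm x y
            simp only [Matrix.mulVec_add, Matrix.mulVec_smul, add_dotProduct,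
              dotProduct_add, smul_dotProduct, dotProduct_smul,
              smul_eq_mul, hsym, ← hadef, ← hbdef]
            ring
          rw [hexp, hx0] at h
          linarith
        have ha : a = 0 := by
          by_contra hne
          have h := key (-a / (b + 1))
          have hb1 : (0:ℝ) < b + 1 := by linarith
          have ha2 : 0 < a ^ 2 := by positivity
          have : 2 * (-a / (b + 1)) * a + (-a / (b + 1)) ^ 2 * b
              = (a ^ 2 * (-b - 2)) / (b + 1) ^ 2 := by
            field_simp
            ring
          rw [this] at h
          have hnum : a ^ 2 * (-b - 2) < 0 := by nlinarith
          have : (a ^ 2 * (-b - 2)) / (b + 1) ^ 2 < 0 := div_neg_of_neg_of_pos hnum (by positivity)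
          linarith
        have : (M.mulVec x) i = a := by
          rw [hadef, hydef]
          simp [dotProduct, Pi.single_apply]
        rw [hxdef] at this
        exact this.trans ha
      -- hence C u = 0 over ℤ
      have hCu : C.mulVec u = 0 := by
        funext i
        have hi : M.mulVec (fun i => (u i : ℝ)) i = 0 := by
          simpa using congrFun hMu i
        have : ((C.mulVec u) i : ℝ) = 0 := by
          rw [← hi]
          simp [hM, Matrix.mulVec, dotProduct, Matrix.map_apply]
        exact_mod_cast this
      -- u = c • δ over ℚ
      have hCuQ : (C.map (Int.cast : ℤ → ℚ)).mulVec (fun i => (u i : ℚ)) = 0 := by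
        funext i
        simp only [Pi.zero_apply]
        have hi : ((C.mulVec u) i : ℚ) = 0 := by
          have := congrFun hCu i
          simp only [Pi.zero_apply] at this
          exact_mod_cast this
        rw [← hi]
        simp [Matrix.mulVec, dotProduct, Matrix.map_apply]
      obtain ⟨c, hc⟩ := (hker _).mp hCuQ
      -- c > 0
      obtain ⟨i, hi⟩ := Function.ne_iff.mp hu0
      have hui : 0 < u i := lt_of_le_of_ne (hupos i) (Ne.symm hi)
      have hci : (u i : ℚ) = c * (δ i : ℚ) := by
        have := congrFun hc i
        simpa using this
      have hcpos : 0 < c := by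
        have hδi : (0:ℚ) < (δ i : ℚ) := by exact_mod_cast hδpos i
        have hui' : (0:ℚ) < (u i : ℚ) := by exact_mod_cast hui
        nlinarith
      -- u ⬝ᵥ μ = c over ℚ
      have hval : ((u ⬝ᵥ μ : ℤ) : ℚ) = c := by
        have hlevelQ : ((δ ⬝ᵥ μ : ℤ) : ℚ) = 1 := by exact_mod_cast hlevel
        have hexp : ((u ⬝ᵥ μ : ℤ) : ℚ) = c * ((δ ⬝ᵥ μ : ℤ) : ℚ) := by
          simp only [dotProduct]
          push_cast
          rw [Finset.mul_sum]
          refine Finset.sum_congr rfl fun j _ => ?_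
          have := congrFun hc j
          simp only [Pi.smul_apply, smul_eq_mul] at this
          rw [this]
          ring
        rw [hexp, hlevelQ, mul_one]
      have : 0 < u ⬝ᵥ μ := by
        have : (0:ℚ) < ((u ⬝ᵥ μ : ℤ) : ℚ) := by rw [hval]; exact hcpos
        exact_mod_cast this
      omega
    · omega
  · intro _
    rw [hCδ]
    simp [hlevel]
end

section
/- Let k be a field and A = k[u^{±1}, w] with the grading for which monopole operators are indexed by γ ∈ ℤ. In the rank-one torus Coulomb branch A(T, N) with T = GL_1 and N a T-representation with weights ξ_1,…,ξ_d ∈ ℤ (multiplicities counted), the 'forgetting matter' map z*: A(T, N) → A(T, 0) defined on basis elements by r_γ ↦ (∏_{j: ξ_j γ < 0} (ξ_j w)^{−ξ_j γ}) r_γ and H•_T(pt)-linearly, is an injective algebra homomorphism, given the multiplication rule in A(T,N): r_γ · r_{γ'} = (∏_{j: ξ_jγ, ξ_jγ' have opposite signs} (ξ_j w)^{min(|ξ_jγ|,|ξ_jγ'|)}) r_{γ+γ'} and in A(T,0): r_γ · r_{γ'} = r_{γ+γ'}. -/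
open Finset Polynomial

/-- The BFN multiplication on the rank-one torus Coulomb branch `A(T, N)`:
`r_γ · r_{γ'} = (∏_{j : ξ_jγ, ξ_jγ' opposite signs} (ξ_j w)^{min(|ξ_jγ|,|ξ_jγ'|)}) r_{γ+γ'}`,
extended `k[w]`-bilinearly on the free module `ℤ →₀ k[w]` with basis `{r_γ}`. -/
noncomputable def bfnMul {k : Type*} [Field k] {d : ℕ} (ξ : Fin d → ℤ)
    (x y : ℤ →₀ Polynomial k) : ℤ →₀ Polynomial k :=
  x.sum fun γ p => y.sum fun γ' q =>
    Finsupp.single (γ + γ')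
      (p * q * ∏ j, if (ξ j * γ < 0 ∧ 0 < ξ j * γ') ∨ (0 < ξ j * γ ∧ ξ j * γ' < 0)
        then ((ξ j : Polynomial k) * X) ^ (min |ξ j * γ| |ξ j * γ'|).toNat else 1)

/-- The factor `∏_{j : ξ_j γ < 0} (ξ_j w)^{−ξ_j γ}` appearing in the forgetting-matter
map `z*(r_γ)`. -/
noncomputable def zfac {k : Type*} [Field k] {d : ℕ} (ξ : Fin d → ℤ) (γ : ℤ) :
    Polynomial k :=
  ∏ j, if ξ j * γ < 0 then ((ξ j : Polynomial k) * X) ^ (-(ξ j * γ)).toNat else 1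

/-- The forgetting-matter map `z* : A(T,N) → A(T,0) = k[w][r,r⁻¹]`,
`r_γ ↦ zfac(γ) · r^γ`, extended `k[w]`-linearly; the target is the Laurent
polynomial ring over `k[w]`. -/
noncomputable def zstar {k : Type*} [Field k] {d : ℕ} (ξ : Fin d → ℤ)
    (x : ℤ →₀ Polynomial k) : LaurentPolynomial (Polynomial k) :=
  x.sum fun γ p => LaurentPolynomial.C (p * zfac ξ γ) * LaurentPolynomial.T γ

section lemmas
variable {k : Type*} [Field k] [CharZero k] {d : ℕ} (ξ : Fin d → ℤ)

lemma zfac_ne_zero (γ : ℤ) : zfac (k := k) ξ γ ≠ 0 := by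
  unfold zfac
  rw [Finset.prod_ne_zero_iff]
  intro j _
  split_ifs with h
  · refine pow_ne_zero _ (mul_ne_zero ?_ Polynomial.X_ne_zero)
    exact_mod_cast (show (ξ j : ℤ) ≠ 0 by rintro h0; rw [h0] at h; simp at h)
  · exact one_ne_zero

lemma zstar_single (γ : ℤ) (p : Polynomial k) :
    zstar ξ (Finsupp.single γ p) =
      LaurentPolynomial.C (p * zfac ξ γ) * LaurentPolynomial.T γ := by
  unfold zstar
  rw [Finsupp.sum_single_index]
  simp

lemma zstar_add (x y : ℤ →₀ Polynomial k) :
    zstar ξ (x + y) = zstar ξ x + zstar ξ y := by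
  unfold zstar
  rw [Finsupp.sum_add_index] <;> simp [add_mul, mul_add]

lemma lcoeff_zstar (x : ℤ →₀ Polynomial k) (γ : ℤ) :
    (zstar ξ x).coeff γ = x γ * zfac ξ γ := by
  induction x using Finsupp.induction_linear with
  | zero => simp [zstar]
  | add a b ha hb =>
      have : (zstar ξ (a + b)).coeff γ
          = (zstar ξ a).coeff γ
            + (zstar ξ b).coeff γ := by
        rw [zstar_add]; rfl
      rw [this, ha, hb, Finsupp.add_apply, add_mul]
  | single γ' p =>
      rw [zstar_single]
      have : (LaurentPolynomial.C (p * zfac ξ γ') * LaurentPolynomial.T γ').coeff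
          = Finsupp.single γ' (p * zfac ξ γ') := by
        rw [← LaurentPolynomial.single_eq_C_mul_T, AddMonoidAlgebra.coeff_single]
      rw [this, Finsupp.single_apply, Finsupp.single_apply]
      split_ifs with h
      · rw [h]
      · simp [h]

lemma zstar_injective : Function.Injective (zstar (k := k) ξ) := by
  intro x y h
  refine Finsupp.ext fun γ => ?_
  have h2 : (zstar ξ x).coeff γ
      = (zstar ξ y).coeff γ := by rw [h]
  rw [lcoeff_zstar, lcoeff_zstar] at h2
  exact mul_right_cancel₀ (zfac_ne_zero ξ γ) h2

lemma zstar_smul (c : Polynomial k) (x : ℤ →₀ Polynomial k) :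
    zstar ξ (c • x) = LaurentPolynomial.C c * zstar ξ x := by
  unfold zstar
  rw [Finsupp.sum_smul_index (by simp), Finsupp.mul_sum]
  refine Finsupp.sum_congr fun γ _ => ?_
  rw [mul_assoc c, map_mul, mul_assoc]

lemma key_fac (c a b : ℤ) :
    (if (a < 0 ∧ 0 < b) ∨ (0 < a ∧ b < 0) then ((c : Polynomial k) * X) ^ (min |a| |b|).toNat else 1)
      * (if a + b < 0 then ((c : Polynomial k) * X) ^ (-(a + b)).toNat else 1)
    = (if a < 0 then ((c : Polynomial k) * X) ^ (-a).toNat else 1)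
      * (if b < 0 then ((c : Polynomial k) * X) ^ (-b).toNat else 1) := by
  have h : ∀ (P : Prop) [Decidable P] (n : ℕ),
      (if P then ((c : Polynomial k) * X) ^ n else 1)
        = ((c : Polynomial k) * X) ^ (if P then n else 0) := by
    intro P _ n; split_ifs <;> simp
  rw [h, h, h, h, ← pow_add, ← pow_add]
  simp only [Int.abs_eq_natAbs]
  congr 1
  split_ifs <;> omega

lemma fac_zfac (γ γ' : ℤ) :
    (∏ j, if (ξ j * γ < 0 ∧ 0 < ξ j * γ') ∨ (0 < ξ j * γ ∧ ξ j * γ' < 0)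
        then ((ξ j : Polynomial k) * X) ^ (min |ξ j * γ| |ξ j * γ'|).toNat else 1)
      * zfac ξ (γ + γ') = zfac ξ γ * zfac ξ γ' := by
  unfold zfac
  rw [← Finset.prod_mul_distrib, ← Finset.prod_mul_distrib]
  refine Finset.prod_congr rfl fun j _ => ?_
  rw [mul_add (ξ j) γ γ']
  exact key_fac (ξ j) (ξ j * γ) (ξ j * γ')

lemma zstar_mul (x y : ℤ →₀ Polynomial k) :
    zstar ξ (bfnMul ξ x y) = zstar ξ x * zstar ξ y := by
  induction x using Finsupp.induction_linear with
  | zero => simp [bfnMul, zstar]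
  | add a b ha hb =>
      have : bfnMul ξ (a + b) y = bfnMul ξ a y + bfnMul ξ b y := by
        unfold bfnMul
        rw [Finsupp.sum_add_index] <;> simp [add_mul, Finsupp.sum_add]
      rw [this, zstar_add, ha, hb, zstar_add, add_mul]
  | single γ p =>
      induction y using Finsupp.induction_linear with
      | zero => simp [bfnMul, zstar]
      | add a b ha hb =>
          have h3 : bfnMul ξ (Finsupp.single γ p) (a + b)
              = bfnMul ξ (Finsupp.single γ p) a + bfnMul ξ (Finsupp.single γ p) b := by
            unfold bfnMul
            rw [Finsupp.sum_single_index (by simp), Finsupp.sum_single_index (by simp),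
              Finsupp.sum_single_index (by simp),
              Finsupp.sum_add_index (by simp) (by intros; simp [mul_add, add_mul])]
          rw [h3, zstar_add, ha, hb, zstar_add, mul_add]
      | single γ' q =>
          have hb : bfnMul ξ (Finsupp.single γ p) (Finsupp.single γ' q)
              = Finsupp.single (γ + γ')
                (p * q * ∏ j, if (ξ j * γ < 0 ∧ 0 < ξ j * γ') ∨ (0 < ξ j * γ ∧ ξ j * γ' < 0)
                  then ((ξ j : Polynomial k) * X) ^ (min |ξ j * γ| |ξ j * γ'|).toNat else 1) := by
            unfold bfnMul
            rw [Finsupp.sum_single_index (by simp), Finsupp.sum_single_index (by simp)]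
          rw [hb, zstar_single, zstar_single, zstar_single]
          have h4 : p * q * (∏ j, if (ξ j * γ < 0 ∧ 0 < ξ j * γ') ∨ (0 < ξ j * γ ∧ ξ j * γ' < 0)
                  then ((ξ j : Polynomial k) * X) ^ (min |ξ j * γ| |ξ j * γ'|).toNat else 1)
                * zfac ξ (γ + γ') = (p * zfac ξ γ) * (q * zfac ξ γ') := by
            rw [mul_assoc (p * q), fac_zfac]; ring
          rw [h4, map_mul, LaurentPolynomial.T_add]; ring

end lemmas

/-- The forgetting-matter map `z* : A(T,N) → A(T,0)` for the rank-one torus is an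
injective algebra homomorphism (unital, additive, `k[w]`-linear, multiplicative for
the BFN multiplication rules). -/
theorem stmt_15 {k : Type*} [Field k] [CharZero k] {d : ℕ} (ξ : Fin d → ℤ) :
    Function.Injective (zstar (k := k) ξ) ∧
      zstar (k := k) ξ (Finsupp.single 0 1) = 1 ∧
      (∀ x y : ℤ →₀ Polynomial k, zstar ξ (x + y) = zstar ξ x + zstar ξ y) ∧
      (∀ (c : Polynomial k) (x : ℤ →₀ Polynomial k),
        zstar ξ (c • x) = LaurentPolynomial.C c * zstar ξ x) ∧
      (∀ x y : ℤ →₀ Polynomial k, zstar ξ (bfnMul ξ x y) = zstar ξ x * zstar ξ y) := by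
  refine ⟨zstar_injective ξ, ?_, zstar_add ξ, zstar_smul ξ, zstar_mul ξ⟩
  rw [zstar_single]
  simp [zfac]
end

section
/- With notation as above for the rank-one torus T = GL_1 and T-representation N with integer weights ξ_1,…,ξ_d, the Fourier transform F: A(T, N) → A(T, N*) defined by F(r_γ) = (−1)^{∑_{j: ξ_j γ > 0} ξ_j γ} r_γ and H•_T(pt)-linearity is an algebra isomorphism, where N* has weights −ξ_1,…,−ξ_d. -/
open Finset Polynomial

/-- The Fourier transform `F : A(T,N) → A(T,N*)`, defined on basis elements by
`F(r_γ) = (−1)^{∑_{j : ξ_j γ > 0} ξ_j γ} r_γ` and extended `k[w]`-linearly. -/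
noncomputable def bfnFourier {k : Type*} [Field k] {d : ℕ} (ξ : Fin d → ℤ)
    (x : ℤ →₀ Polynomial k) : ℤ →₀ Polynomial k :=
  x.sum fun γ p =>
    Finsupp.single γ
      ((-1 : Polynomial k) ^ (∑ j, if 0 < ξ j * γ then (ξ j * γ).toNat else 0) * p)

section Aux

variable {k : Type*} [Field k] {d : ℕ} (ξ : Fin d → ℤ)

noncomputable def eSign (γ : ℤ) : Polynomial k :=
  (-1 : Polynomial k) ^ (∑ j, if 0 < ξ j * γ then (ξ j * γ).toNat else 0)

lemma eSign_mul_self (γ : ℤ) : (eSign ξ γ : Polynomial k) * eSign ξ γ = 1 := by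
  rw [eSign, ← pow_add]
  exact Even.neg_one_pow (Even.add_self _)

lemma bfnFourier_single (γ : ℤ) (p : Polynomial k) :
    bfnFourier ξ (Finsupp.single γ p) = Finsupp.single γ (eSign ξ γ * p) := by
  rw [bfnFourier, Finsupp.sum_single_index (by simp)]
  rfl

lemma bfnFourier_add (x y : ℤ →₀ Polynomial k) :
    bfnFourier ξ (x + y) = bfnFourier ξ x + bfnFourier ξ y := by
  unfold bfnFourier
  exact Finsupp.sum_add_index' (by simp) (fun a b₁ b₂ => by rw [mul_add, Finsupp.single_add])

lemma bfnFourier_zero : bfnFourier (k := k) ξ 0 = 0 := Finsupp.sum_zero_index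

lemma bfnMul_single (γ γ' : ℤ) (p q : Polynomial k) :
    bfnMul ξ (Finsupp.single γ p) (Finsupp.single γ' q) =
      Finsupp.single (γ + γ')
        (p * q * ∏ j, if (ξ j * γ < 0 ∧ 0 < ξ j * γ') ∨ (0 < ξ j * γ ∧ ξ j * γ' < 0)
          then ((ξ j : Polynomial k) * X) ^ (min |ξ j * γ| |ξ j * γ'|).toNat else 1) := by
  rw [bfnMul, Finsupp.sum_single_index (by simp), Finsupp.sum_single_index (by simp)]

lemma bfnMul_add_left (x x' y : ℤ →₀ Polynomial k) :
    bfnMul ξ (x + x') y = bfnMul ξ x y + bfnMul ξ x' y := by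
  unfold bfnMul
  refine Finsupp.sum_add_index' (fun a => by simp) (fun a b₁ b₂ => ?_)
  rw [← Finsupp.sum_add]
  exact Finsupp.sum_congr fun γ' _ => by rw [add_mul, add_mul, Finsupp.single_add]

lemma bfnMul_add_right (x y y' : ℤ →₀ Polynomial k) :
    bfnMul ξ x (y + y') = bfnMul ξ x y + bfnMul ξ x y' := by
  unfold bfnMul
  rw [← Finsupp.sum_add]
  refine Finsupp.sum_congr fun γ _ => ?_
  exact Finsupp.sum_add_index' (fun a => by simp) (fun a b₁ b₂ => by
    rw [mul_add, add_mul, Finsupp.single_add])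

lemma bfnMul_zero_right (x : ℤ →₀ Polynomial k) : bfnMul ξ x 0 = 0 := by
  unfold bfnMul
  simp [Finsupp.sum_zero_index]

lemma bfnMul_zero_left (y : ℤ →₀ Polynomial k) : bfnMul ξ 0 y = 0 := Finsupp.sum_zero_index

lemma key (a b : ℤ) (c : Polynomial k) :
    (-1 : Polynomial k) ^ (if 0 < a + b then (a + b).toNat else 0) *
        (if (a < 0 ∧ 0 < b) ∨ (0 < a ∧ b < 0)
          then (c * X) ^ (min |a| |b|).toNat else 1) =
      ((-1 : Polynomial k) ^ (if 0 < a then a.toNat else 0) *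
          (-1 : Polynomial k) ^ (if 0 < b then b.toNat else 0)) *
        (if (-a < 0 ∧ 0 < -b) ∨ (0 < -a ∧ -b < 0)
          then (-c * X) ^ (min |-a| |-b|).toNat else 1) := by
  have hc : ((-a < 0 ∧ 0 < -b) ∨ (0 < -a ∧ -b < 0)) ↔ ((a < 0 ∧ 0 < b) ∨ (0 < a ∧ b < 0)) := by
    constructor <;> intro h <;> omega
  simp only [hc, abs_neg]
  by_cases h : (a < 0 ∧ 0 < b) ∨ (0 < a ∧ b < 0)
  · rw [if_pos h, if_pos h, neg_mul, neg_pow (c * X), ← pow_add, ← mul_assoc, ← pow_add]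
    congr 1
    rw [neg_one_pow_eq_pow_mod_two, neg_one_pow_eq_pow_mod_two ((_ + _) + _)]
    congr 1
    rcases h with ⟨h1, h2⟩ | ⟨h1, h2⟩
    · rw [abs_of_neg h1, abs_of_pos h2]
      split_ifs <;> omega
    · rw [abs_of_pos h1, abs_of_neg h2]
      split_ifs <;> omega
  · rw [if_neg h, if_neg h, mul_one, mul_one, ← pow_add]
    congr 1
    split_ifs <;> omega

lemma main_single (γ γ' : ℤ) (p q : Polynomial k) :
    bfnFourier ξ (bfnMul ξ (Finsupp.single γ p) (Finsupp.single γ' q)) =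
      bfnMul (fun j => -ξ j) (bfnFourier ξ (Finsupp.single γ p))
        (bfnFourier ξ (Finsupp.single γ' q)) := by
  rw [bfnMul_single, bfnFourier_single, bfnFourier_single, bfnFourier_single, bfnMul_single]
  have hprod :
      (eSign ξ (γ + γ') : Polynomial k) *
          ∏ j, (if (ξ j * γ < 0 ∧ 0 < ξ j * γ') ∨ (0 < ξ j * γ ∧ ξ j * γ' < 0)
            then ((ξ j : Polynomial k) * X) ^ (min |ξ j * γ| |ξ j * γ'|).toNat else 1) =
        (eSign ξ γ * eSign ξ γ') *
          ∏ j, (if ((-ξ j) * γ < 0 ∧ 0 < (-ξ j) * γ') ∨ (0 < (-ξ j) * γ ∧ (-ξ j) * γ' < 0)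
            then (((-ξ j : ℤ) : Polynomial k) * X) ^ (min |(-ξ j) * γ| |(-ξ j) * γ'|).toNat
            else 1) := by
    unfold eSign
    rw [← Finset.prod_pow_eq_pow_sum, ← Finset.prod_pow_eq_pow_sum, ← Finset.prod_pow_eq_pow_sum,
      ← Finset.prod_mul_distrib, ← Finset.prod_mul_distrib, ← Finset.prod_mul_distrib]
    refine Finset.prod_congr rfl fun j _ => ?_
    have h := key (ξ j * γ) (ξ j * γ') ((ξ j : ℤ) : Polynomial k)
    rw [mul_add]
    simpa [neg_mul, Int.cast_neg] using h
  congr 1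
  calc eSign ξ (γ + γ') * (p * q * ∏ j, _) = p * q * (eSign ξ (γ + γ') * ∏ j, _) := by ring
    _ = p * q * ((eSign ξ γ * eSign ξ γ') * ∏ j, _) := by rw [hprod]
    _ = _ := by ring

lemma main_single_left (γ : ℤ) (p : Polynomial k) (y : ℤ →₀ Polynomial k) :
    bfnFourier ξ (bfnMul ξ (Finsupp.single γ p) y) =
      bfnMul (fun j => -ξ j) (bfnFourier ξ (Finsupp.single γ p)) (bfnFourier ξ y) := by
  induction y using Finsupp.induction with
  | zero => simp [bfnMul_zero_right, bfnFourier_zero]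
  | single_add γ' q g hγ' hq ihy =>
    rw [bfnMul_add_right, bfnFourier_add, bfnFourier_add, ihy, bfnMul_add_right, main_single]

end Aux

/-- The Fourier transform `F : A(T,N) → A(T,N*)` is an algebra isomorphism, where
`N*` has weights `−ξ_j`: it is bijective, unital, additive, `k[w]`-linear, and
intertwines the BFN multiplication for `ξ` with that for `−ξ`. -/
theorem stmt_16 {k : Type*} [Field k] {d : ℕ} (ξ : Fin d → ℤ) :
    Function.Bijective (bfnFourier (k := k) ξ) ∧
      bfnFourier (k := k) ξ (Finsupp.single 0 1) = Finsupp.single 0 1 ∧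
      (∀ x y : ℤ →₀ Polynomial k, bfnFourier ξ (x + y) = bfnFourier ξ x + bfnFourier ξ y) ∧
      (∀ (c : Polynomial k) (x : ℤ →₀ Polynomial k),
        bfnFourier ξ (c • x) = c • bfnFourier ξ x) ∧
      (∀ x y : ℤ →₀ Polynomial k,
        bfnFourier ξ (bfnMul ξ x y) = bfnMul (fun j => -ξ j) (bfnFourier ξ x) (bfnFourier ξ y)) := by
  have hinv : Function.Involutive (bfnFourier (k := k) ξ) := by
    intro x
    induction x using Finsupp.induction with
    | zero => rw [bfnFourier_zero, bfnFourier_zero]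
    | single_add γ p f hγ hp ih =>
      rw [bfnFourier_add, bfnFourier_add, ih, bfnFourier_single, bfnFourier_single,
        ← mul_assoc, eSign_mul_self, one_mul]
  refine ⟨hinv.bijective, ?_, bfnFourier_add ξ, ?_, ?_⟩
  · rw [bfnFourier_single]
    congr 1
    rw [eSign, mul_one]
    simp
  · intro c x
    induction x using Finsupp.induction with
    | zero => rw [smul_zero, bfnFourier_zero, smul_zero]
    | single_add γ p f hγ hp ih =>
      rw [smul_add, bfnFourier_add, bfnFourier_add, smul_add, ih, Finsupp.smul_single,
        bfnFourier_single, bfnFourier_single, Finsupp.smul_single, smul_eq_mul, smul_eq_mul,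
        mul_left_comm]
  · intro x y
    induction x using Finsupp.induction with
    | zero => simp [bfnMul_zero_left, bfnFourier_zero]
    | single_add γ p f hγ hp ihx =>
      rw [bfnMul_add_left, bfnFourier_add, bfnFourier_add, ihx, bfnMul_add_left,
        main_single_left]
end
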